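/- Suppose (a_n)_{n≥1} is a sequence of nonnegative reals satisfying a_{n+1} ≤ K ∑_{i=1}^n a_i a_{n+1-i} for all n ≥ 1, for some constant K > 0. Then the power series ∑ a_n t^n has positive radius of convergence; in fact a_n ≤ (k c^n)/n^2 where k = 1/(16K) and c is chosen so that a_1 ≤ k c, by induction using (1/(16k)) ∑_{i=1}^n (k c^i/i^2)(k c^{n+1-i}/(n+1-i)^2) ≤ k c^{n+1}/(n+1)^2. -/

import Mathlib

lemma myBaselAux : ∀ n : ℕ, 1 ≤ n → ∑ i ∈ Finset.Icc 1 n, (1:ℝ)/(i:ℝ)^2 ≤ 2 - 1/n := by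
  intro n
  induction n with
  | zero => intro h; omega
  | succ n ih =>
    intro _
    rcases Nat.eq_zero_or_pos n with rfl | hn
    · norm_num
    · have hn0 : (0:ℝ) < n := by exact_mod_cast hn
      rw [Finset.sum_Icc_succ_top (by omega : 1 ≤ n + 1)]
      have h1 : (1:ℝ)/((n:ℝ)+1)^2 ≤ 1/((n:ℝ)*((n:ℝ)+1)) := by
        apply one_div_le_one_div_of_le (by positivity)
        nlinarith
      have h2 : (1:ℝ)/((n:ℝ)*((n:ℝ)+1)) = 1/(n:ℝ) - 1/((n:ℝ)+1) := by
        field_simp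
        ring
      have h3 := ih hn
      push_cast
      nlinarith [h3, h1, h2]

lemma myBasel (n : ℕ) : ∑ i ∈ Finset.Icc 1 n, (1:ℝ)/(i:ℝ)^2 ≤ 2 := by
  rcases Nat.eq_zero_or_pos n with rfl | hn
  · simp
  · have hn0 : (0:ℝ) < n := by exact_mod_cast hn
    have h4 : (0:ℝ) < 1/n := by positivity
    linarith [myBaselAux n hn]

lemma myReflect (n : ℕ) :
    ∑ i ∈ Finset.Icc 1 n, (1:ℝ)/(((n+1-i : ℕ)):ℝ)^2 = ∑ i ∈ Finset.Icc 1 n, (1:ℝ)/((i:ℝ))^2 := by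
  refine Finset.sum_nbij' (fun i => n+1-i) (fun i => n+1-i) ?_ ?_ ?_ ?_ ?_ <;>
    intro a ha <;> simp only [Finset.mem_Icc] at * <;> omega

lemma myAuxSum (n : ℕ) (hn : 1 ≤ n) :
    ∑ i ∈ Finset.Icc 1 n, (1:ℝ)/((i:ℝ)^2 * (((n+1-i : ℕ)):ℝ)^2) ≤ 16/((n:ℝ)+1)^2 := by
  have hpos : (0:ℝ) < ((n:ℝ)+1)^2 := by positivity
  have hstep : ∀ i ∈ Finset.Icc 1 n,
      (1:ℝ)/((i:ℝ)^2 * (((n+1-i : ℕ)):ℝ)^2) ≤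
        2/((n:ℝ)+1)^2 * ((1:ℝ)/(i:ℝ)^2 + (1:ℝ)/(((n+1-i:ℕ)):ℝ)^2) := by
    intro i hi
    simp only [Finset.mem_Icc] at hi
    have hx0 : (0:ℝ) < (i:ℝ) := by exact_mod_cast (by omega : 0 < i)
    have hy0 : (0:ℝ) < (((n+1-i:ℕ)):ℝ) := by exact_mod_cast (by omega : 0 < n+1-i)
    set x : ℝ := (i:ℝ)
    set y : ℝ := (((n+1-i:ℕ)):ℝ)
    have hxy : x + y = (n:ℝ) + 1 := by
      show (i:ℝ) + (((n+1-i:ℕ)):ℝ) = (n:ℝ) + 1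
      rw [Nat.cast_sub (by omega : i ≤ n+1)]
      push_cast
      ring
    have e : (1:ℝ)/(x^2*y^2) = (1/x + 1/y)^2/(x+y)^2 := by
      field_simp
      ring
    have le1 : (1/x + 1/y)^2 ≤ 2*((1/x)^2 + (1/y)^2) := by
      nlinarith [sq_nonneg (1/x - 1/y)]
    rw [e, hxy, div_le_iff₀ hpos]
    calc (1/x + 1/y)^2 ≤ 2*((1/x)^2 + (1/y)^2) := le1
      _ = 2/((n:ℝ)+1)^2 * ((1:ℝ)/x^2 + 1/y^2) * ((n:ℝ)+1)^2 := by
          field_simp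
  calc ∑ i ∈ Finset.Icc 1 n, (1:ℝ)/((i:ℝ)^2 * (((n+1-i : ℕ)):ℝ)^2)
      ≤ ∑ i ∈ Finset.Icc 1 n, 2/((n:ℝ)+1)^2 * ((1:ℝ)/(i:ℝ)^2 + (1:ℝ)/(((n+1-i:ℕ)):ℝ)^2) :=
        Finset.sum_le_sum hstep
    _ = 2/((n:ℝ)+1)^2 * (∑ i ∈ Finset.Icc 1 n, (1:ℝ)/(i:ℝ)^2
          + ∑ i ∈ Finset.Icc 1 n, (1:ℝ)/(((n+1-i:ℕ)):ℝ)^2) := by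
        rw [← Finset.mul_sum, Finset.sum_add_distrib]
    _ ≤ 2/((n:ℝ)+1)^2 * (2 + 2) := by
        rw [myReflect]
        have h2 : (0:ℝ) ≤ 2/((n:ℝ)+1)^2 := by positivity
        exact mul_le_mul_of_nonneg_left (add_le_add (myBasel n) (myBasel n)) h2
    _ ≤ 16/((n:ℝ)+1)^2 := by
        rw [div_mul_eq_mul_div, div_le_div_iff₀ hpos hpos]
        nlinarith


/-- If a sequence of nonnegative reals satisfies the recursive bound
`a_{n+1} ≤ K ∑_{i=1}^n a_i a_{n+1-i}` (with `K > 0`), then with `k = 1/(16K)`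
and any `c > 0` with `a_1 ≤ k c` one has `a_n ≤ k cⁿ / n²` for all `n ≥ 1`;
hence the power series `∑ a_n tⁿ` has positive radius of convergence. -/
theorem recursive_majorant_convergence (a : ℕ → ℝ) (ha : ∀ n, 0 ≤ a n)
    (K : ℝ) (hK : 0 < K)
    (hrec : ∀ n, 1 ≤ n →
      a (n + 1) ≤ K * ∑ i ∈ Finset.Icc 1 n, a i * a (n + 1 - i))
    (c : ℝ) (hc : 0 < c) (hc1 : a 1 ≤ (1 / (16 * K)) * c) :
    (∀ n, 1 ≤ n → a n ≤ (1 / (16 * K)) * c ^ n / (n : ℝ) ^ 2) ∧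
    ∃ r : ℝ, 0 < r ∧ ∀ t : ℝ, |t| < r → Summable (fun n => a n * t ^ n) := by
  set k : ℝ := 1 / (16 * K) with hkdef
  have hk0 : 0 < k := by positivity
  have key : ∀ n, 1 ≤ n → a n ≤ k * c ^ n / (n : ℝ) ^ 2 := by
    intro n
    induction n using Nat.strong_induction_on with
    | _ n ih =>
      intro hn
      rcases Nat.lt_or_ge n 2 with h2 | h2
      · interval_cases n
        simpa using hc1
      · obtain ⟨m, rfl⟩ : ∃ m, n = m + 1 := ⟨n - 1, by omega⟩
        have hm : 1 ≤ m := by omega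
        have hmpos : (0:ℝ) < (m:ℝ) + 1 := by positivity
        have step := hrec m hm
        have hterm : ∀ i ∈ Finset.Icc 1 m,
            a i * a (m + 1 - i) ≤ k ^ 2 * c ^ (m+1) * ((1:ℝ)/((i:ℝ)^2 * (((m+1-i : ℕ)):ℝ)^2)) := by
          intro i hi
          simp only [Finset.mem_Icc] at hi
          have hi0 : (0:ℝ) < (i:ℝ) := by exact_mod_cast (by omega : 0 < i)
          have hj0 : (0:ℝ) < (((m+1-i:ℕ)):ℝ) := by exact_mod_cast (by omega : 0 < m+1-i)
          have h1 : a i ≤ k * c ^ i / (i:ℝ)^2 := ih i (by omega) hi.1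
          have h2' : a (m+1-i) ≤ k * c ^ (m+1-i) / (((m+1-i:ℕ)):ℝ)^2 :=
            ih (m+1-i) (by omega) (by omega)
          calc a i * a (m+1-i) ≤ (k * c ^ i / (i:ℝ)^2) * (k * c ^ (m+1-i) / (((m+1-i:ℕ)):ℝ)^2) :=
                mul_le_mul h1 h2' (ha _) (by positivity)
            _ = k ^ 2 * (c ^ i * c ^ (m+1-i)) * ((1:ℝ)/((i:ℝ)^2 * (((m+1-i : ℕ)):ℝ)^2)) := by
                field_simp
            _ = k ^ 2 * c ^ (m+1) * ((1:ℝ)/((i:ℝ)^2 * (((m+1-i : ℕ)):ℝ)^2)) := by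
                have hie : i + (m+1-i) = m+1 := by omega
                rw [← pow_add, hie]
        have hsum := myAuxSum m hm
        calc a (m+1) ≤ K * ∑ i ∈ Finset.Icc 1 m, a i * a (m + 1 - i) := step
          _ ≤ K * ∑ i ∈ Finset.Icc 1 m,
                k ^ 2 * c ^ (m+1) * ((1:ℝ)/((i:ℝ)^2 * (((m+1-i : ℕ)):ℝ)^2)) :=
              mul_le_mul_of_nonneg_left (Finset.sum_le_sum hterm) hK.le
          _ = K * (k ^ 2 * c ^ (m+1)) *
                ∑ i ∈ Finset.Icc 1 m, (1:ℝ)/((i:ℝ)^2 * (((m+1-i : ℕ)):ℝ)^2) := by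
              rw [← Finset.mul_sum]; ring
          _ ≤ K * (k ^ 2 * c ^ (m+1)) * (16/((m:ℝ)+1)^2) :=
              mul_le_mul_of_nonneg_left hsum (by positivity)
          _ = k * c ^ (m+1) / ((m+1 : ℕ) : ℝ)^2 := by
              push_cast
              rw [hkdef]
              field_simp
  refine ⟨key, 1/c, by positivity, fun t ht => ?_⟩
  have hct : c * |t| < 1 := by
    rw [abs_lt] at ht
    have : |t| < 1/c := abs_lt.mpr ht
    calc c * |t| < c * (1/c) := by
          apply mul_lt_mul_of_pos_left this hc
      _ = 1 := by field_simp
  have hgeom : Summable (fun n : ℕ => k * c * |t| * (c * |t|)^n) :=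
    (summable_geometric_of_lt_one (by positivity) hct).mul_left _
  have habs : Summable (fun n : ℕ => |a (n+1) * t^(n+1)|) := by
    apply Summable.of_nonneg_of_le (fun n => abs_nonneg _) _ hgeom
    intro n
    have h1 : |a (n+1) * t^(n+1)| = a (n+1) * |t|^(n+1) := by
      rw [abs_mul, abs_of_nonneg (ha _), abs_pow]
    have h2 : a (n+1) ≤ k * c^(n+1) / ((n+1 : ℕ) : ℝ)^2 := key (n+1) (by omega)
    have h3 : k * c^(n+1) / ((n+1 : ℕ) : ℝ)^2 ≤ k * c^(n+1) := by
      apply div_le_self (by positivity)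
      have : (1:ℝ) ≤ ((n+1 : ℕ) : ℝ) := by exact_mod_cast Nat.succ_le_succ (Nat.zero_le n)
      nlinarith
    calc |a (n+1) * t^(n+1)| = a (n+1) * |t|^(n+1) := h1
      _ ≤ (k * c^(n+1)) * |t|^(n+1) :=
          mul_le_mul_of_nonneg_right (h2.trans h3) (by positivity)
      _ = k * c * |t| * (c * |t|)^n := by
          rw [mul_pow, pow_succ, pow_succ]; ring
  have h4 : Summable (fun n : ℕ => a (n+1) * t^(n+1)) := habs.of_abs
  exact (summable_nat_add_iff 1).mp h4
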